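/- Let G be a graph and P = {a_1, …, a_k} a set of vertices inducing a path, each of degree 2 in G, with outside neighbors a_0 of a_1 and a_{k+1} of a_k. If a_0 = a_{k+1} or a_0 is adjacent to a_{k+1} (so P ∪ {a_0, a_{k+1}} induces a cycle), then eliminating the vertices of P first, in any order, extends to a minimum fill-in ordering of G. -/

import Mathlib

open SimpleGraph

attribute [local instance] Classical.propDecidable

variable {V : Type*} [Fintype V] [DecidableEq V]

/-- The elimination graph `G_x`: delete `x` and complete its neighborhood to a clique.
(The eliminated vertex is kept as an isolated vertex.) -/
def elimG (G : SimpleGraph V) (x : V) : SimpleGraph V where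
  Adj u v := u ≠ v ∧ u ≠ x ∧ v ≠ x ∧ (G.Adj u v ∨ (G.Adj x u ∧ G.Adj x v))
  symm := by
    constructor
    intro u v h
    obtain ⟨h1, h2, h3, h4⟩ := h
    refine ⟨h1.symm, h3, h2, ?_⟩
    rcases h4 with h | ⟨h4, h5⟩
    · exact Or.inl h.symm
    · exact Or.inr ⟨h5, h4⟩
  loopless := ⟨by intro v h; exact h.1 rfl⟩

/-- The deficiency `D(x)`: the set of unordered pairs of distinct, non-adjacent
neighbors of `x`. -/
noncomputable def deficiencyFinset (G : SimpleGraph V) (x : V) : Finset (Sym2 V) :=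
  ((Finset.univ ×ˢ Finset.univ : Finset (V × V)).filter
    (fun p => p.1 ≠ p.2 ∧ G.Adj x p.1 ∧ G.Adj x p.2 ∧ ¬ G.Adj p.1 p.2)).image
    (fun p => s(p.1, p.2))

/-- Successive elimination of a list of vertices. -/
def elimList : SimpleGraph V → List V → SimpleGraph V
  | G, [] => G
  | G, x :: xs => elimList (elimG G x) xs

/-- The fill-in of an elimination ordering given as a list: the total number of
edges added during the elimination process. -/
noncomputable def fillList : SimpleGraph V → List V → ℕ
  | _, [] => 0
  | G, x :: xs => (deficiencyFinset G x).card + fillList (elimG G x) xs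

/-- The set of fill edges added during the elimination process. -/
noncomputable def fillEdges : SimpleGraph V → List V → Finset (Sym2 V)
  | _, [] => ∅
  | G, x :: xs => deficiencyFinset G x ∪ fillEdges (elimG G x) xs

/-- A list is an (elimination) ordering if it enumerates every vertex exactly once. -/
def IsOrdering (L : List V) : Prop := L.Nodup ∧ ∀ v : V, v ∈ L

/-- The minimum fill-in `Φ(G)`. -/
noncomputable def minFillIn (G : SimpleGraph V) : ℕ :=
  sInf {n | ∃ L : List V, IsOrdering L ∧ fillList G L = n}

/-- A vertex is simplicial if its neighborhood is a clique. -/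
def IsSimplicial (G : SimpleGraph V) (x : V) : Prop :=
  ∀ a b, G.Adj x a → G.Adj x b → a ≠ b → G.Adj a b

/-- `a` and `b` are indistinguishable: equal closed neighborhoods. -/
def Indistinguishable (G : SimpleGraph V) (a b : V) : Prop :=
  a ≠ b ∧ insert a (G.neighborSet a) = insert b (G.neighborSet b)

/-- `a` and `b` are twins: equal open neighborhoods (hence non-adjacent). -/
def Twins (G : SimpleGraph V) (a b : V) : Prop :=
  a ≠ b ∧ G.neighborSet a = G.neighborSet b

/-- Chordality: no induced cycle of length at least 4, equivalently every cycle of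
length at least 4 has a chord. -/
def IsChordal (G : SimpleGraph V) : Prop :=
  ∀ n : ℕ, 4 ≤ n → ∀ f : ZMod n → V, Function.Injective f →
    ¬ (∀ i j : ZMod n, G.Adj (f i) (f j) ↔ (j = i + 1 ∨ i = j + 1))

/-- `T` is a triangulation of `G`: a set of non-edges whose addition makes `G` chordal. -/
def IsTriangulation (G : SimpleGraph V) (T : Finset (Sym2 V)) : Prop :=
  (∀ e ∈ T, ¬ e.IsDiag ∧ e ∉ G.edgeSet) ∧
    IsChordal (G ⊔ SimpleGraph.fromEdgeSet (↑T : Set (Sym2 V)))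

/-- A minimum triangulation. -/
def IsMinTriangulation (G : SimpleGraph V) (T : Finset (Sym2 V)) : Prop :=
  IsTriangulation G T ∧ ∀ T' : Finset (Sym2 V), IsTriangulation G T' → T.card ≤ T'.card

/-- The graph obtained from `G` by deleting the vertices in `S`
(deleted vertices are kept as isolated vertices). -/
def deleteSet (G : SimpleGraph V) (S : Set V) : SimpleGraph V where
  Adj u v := G.Adj u v ∧ u ∉ S ∧ v ∉ S
  symm := ⟨fun _ _ ⟨h, hu, hv⟩ => ⟨h.symm, hv, hu⟩⟩
  loopless := ⟨fun v h => G.loopless.irrefl v h.1⟩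

set_option linter.unusedSectionVars false

section Batch1

variable {V : Type*} [Fintype V] [DecidableEq V]

lemma elimG_adj {G : SimpleGraph V} {x u v : V} :
    (elimG G x).Adj u v ↔ u ≠ v ∧ u ≠ x ∧ v ≠ x ∧ (G.Adj u v ∨ (G.Adj x u ∧ G.Adj x v)) :=
  Iff.rfl

lemma mem_deficiency {G : SimpleGraph V} {x u v : V} :
    s(u,v) ∈ deficiencyFinset G x ↔ ((elimG G x).Adj u v ∧ ¬ G.Adj u v) := by
  constructor
  · intro h
    simp only [deficiencyFinset, Finset.mem_image, Finset.mem_filter, Finset.mem_product] at h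
    obtain ⟨⟨p1, p2⟩, ⟨-, hne, h1, h2, h3⟩, hs⟩ := h
    rw [Sym2.eq_iff] at hs
    rcases hs with ⟨rfl, rfl⟩ | ⟨rfl, rfl⟩
    · exact ⟨⟨hne, fun h => h1.ne' h, fun h => h2.ne' h, Or.inr ⟨h1, h2⟩⟩, h3⟩
    · exact ⟨⟨hne.symm, fun h => h2.ne' h, fun h => h1.ne' h,
        Or.inr ⟨h2, h1⟩⟩, fun h => h3 h.symm⟩
  · rintro ⟨⟨hne, hux, hvx, hor⟩, hna⟩
    rcases hor with h | ⟨h1, h2⟩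
    · exact absurd h hna
    simp only [deficiencyFinset, Finset.mem_image, Finset.mem_filter, Finset.mem_product]
    exact ⟨(u, v), ⟨⟨Finset.mem_univ _, Finset.mem_univ _⟩, hne, h1, h2, hna⟩, rfl⟩

lemma elimList_append (G : SimpleGraph V) (A B : List V) :
    elimList G (A ++ B) = elimList (elimList G A) B := by
  induction A generalizing G with
  | nil => rfl
  | cons x xs ih =>
    show elimList (elimG G x) (xs ++ B) = elimList (elimList (elimG G x) xs) B
    exact ih _

lemma fillList_append (G : SimpleGraph V) (A B : List V) :
    fillList G (A ++ B) = fillList G A + fillList (elimList G A) B := by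
  induction A generalizing G with
  | nil => simp [fillList, elimList]
  | cons x xs ih =>
    show (deficiencyFinset G x).card + fillList (elimG G x) (xs ++ B) = _
    rw [ih]
    show _ = (deficiencyFinset G x).card + fillList (elimG G x) xs +
      fillList (elimList (elimG G x) xs) B
    ring

lemma elimG_adj_of_adj {G : SimpleGraph V} {x u v : V} (h : G.Adj u v)
    (hu : u ≠ x) (hv : v ≠ x) : (elimG G x).Adj u v :=
  ⟨h.ne, hu, hv, Or.inl h⟩

lemma elimList_adj_of_adj {G : SimpleGraph V} {S : List V} {u v : V} (h : G.Adj u v)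
    (hu : u ∉ S) (hv : v ∉ S) : (elimList G S).Adj u v := by
  induction S generalizing G with
  | nil => exact h
  | cons x xs ih =>
    simp only [List.mem_cons, not_or] at hu hv
    exact ih (elimG_adj_of_adj h hu.1 hv.1) hu.2 hv.2

def Isolated (G : SimpleGraph V) (x : V) : Prop := ∀ w, ¬ G.Adj x w

lemma Isolated.elimG {G : SimpleGraph V} {x y : V} (h : Isolated G x) :
    Isolated (elimG G y) x := by
  rintro w ⟨-, -, -, h4 | ⟨h1, h2⟩⟩
  · exact h w h4
  · exact h y h1.symm

lemma isolated_elimG_self (G : SimpleGraph V) (x : V) : Isolated (elimG G x) x :=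
  fun _ hw => hw.2.1 rfl

lemma Isolated.elimList {G : SimpleGraph V} {x : V} (h : Isolated G x) (S : List V) :
    Isolated (elimList G S) x := by
  induction S generalizing G with
  | nil => exact h
  | cons y ys ih => exact ih h.elimG

lemma adj_elimList_not_mem {G : SimpleGraph V} {S : List V} {u v : V}
    (h : (elimList G S).Adj u v) : u ∉ S ∧ v ∉ S := by
  induction S generalizing G with
  | nil => simp
  | cons x xs ih =>
    obtain ⟨hu, hv⟩ := ih h
    have hx : Isolated (elimList (elimG G x) xs) x :=
      (isolated_elimG_self G x).elimList xs
    have hux : u ≠ x := by rintro rfl; exact hx v h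
    have hvx : v ≠ x := by rintro rfl; exact hx u h.symm
    simp only [List.mem_cons, not_or]
    exact ⟨⟨hux, hu⟩, ⟨hvx, hv⟩⟩

lemma elimG_eq_of_isolated {G : SimpleGraph V} {x : V} (h : Isolated G x) :
    elimG G x = G := by
  ext u v
  constructor
  · rintro ⟨-, -, -, h4 | ⟨h1, h2⟩⟩
    · exact h4
    · exact absurd h1 (h u)
  · intro hadj
    refine ⟨hadj.ne, ?_, ?_, Or.inl hadj⟩
    · rintro rfl; exact h v hadj
    · rintro rfl; exact h u hadj.symm

lemma deficiency_eq_empty_of_isolated {G : SimpleGraph V} {x : V} (h : Isolated G x) :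
    deficiencyFinset G x = ∅ := by
  ext e
  induction e using Sym2.ind with
  | _ u v =>
    simp only [Finset.notMem_empty, iff_false, mem_deficiency]
    rintro ⟨⟨-, -, -, h4 | ⟨h1, -⟩⟩, hna⟩
    · exact hna h4
    · exact h u h1

lemma not_mem_deficiency_of_isolated {G : SimpleGraph V} {x y : V} (h : Isolated G x)
    {e : Sym2 V} (he : e ∈ deficiencyFinset G y) : x ∉ e := by
  induction e using Sym2.ind with
  | _ u v =>
    rw [mem_deficiency] at he
    obtain ⟨⟨-, -, -, hor⟩, hna⟩ := he
    rcases hor with h4 | ⟨h1, h2⟩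
    · exact absurd h4 hna
    rw [Sym2.mem_iff]
    rintro (rfl | rfl)
    · exact h y h1.symm
    · exact h y h2.symm

lemma isolated_not_mem_fillEdges {G : SimpleGraph V} {x : V} (h : Isolated G x)
    {S : List V} {e : Sym2 V} (he : e ∈ fillEdges G S) : x ∉ e := by
  induction S generalizing G with
  | nil => simp [fillEdges] at he
  | cons y ys ih =>
    rw [fillEdges, Finset.mem_union] at he
    rcases he with he | he
    · exact not_mem_deficiency_of_isolated h he
    · exact ih h.elimG he

lemma elimG_mono {G1 G2 : SimpleGraph V} (h : G1 ≤ G2) (x : V) :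
    elimG G1 x ≤ elimG G2 x := by
  rintro u v ⟨h1, h2, h3, h4 | ⟨ha, hb⟩⟩
  · exact ⟨h1, h2, h3, Or.inl (h h4)⟩
  · exact ⟨h1, h2, h3, Or.inr ⟨h ha, h hb⟩⟩

lemma elimList_mono {G1 G2 : SimpleGraph V} (h : G1 ≤ G2) (S : List V) :
    elimList G1 S ≤ elimList G2 S := by
  induction S generalizing G1 G2 with
  | nil => exact h
  | cons x xs ih => exact ih (elimG_mono h x)

lemma fillEdges_not_mem_edgeSet {G : SimpleGraph V} {S : List V} {e : Sym2 V}
    (he : e ∈ fillEdges G S) : e ∉ G.edgeSet := by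
  induction S generalizing G with
  | nil => simp [fillEdges] at he
  | cons x xs ih =>
    rw [fillEdges, Finset.mem_union] at he
    rcases he with he | he
    · induction e using Sym2.ind with
      | _ u v =>
        rw [mem_deficiency] at he
        exact he.2
    · have hnE : e ∉ (elimG G x).edgeSet := ih he
      have hx : x ∉ e := isolated_not_mem_fillEdges (isolated_elimG_self G x) he
      induction e using Sym2.ind with
      | _ u v =>
        intro hE
        rw [SimpleGraph.mem_edgeSet] at hE
        rw [Sym2.mem_iff, not_or] at hx
        exact hnE (elimG_adj_of_adj hE (fun h' => hx.1 h'.symm) (fun h' => hx.2 h'.symm))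

lemma deficiency_subset_edgeSet {G : SimpleGraph V} {x : V} {e : Sym2 V}
    (he : e ∈ deficiencyFinset G x) : e ∈ (elimG G x).edgeSet := by
  induction e using Sym2.ind with
  | _ u v => exact (mem_deficiency.1 he).1

lemma fillList_eq_card (G : SimpleGraph V) (S : List V) :
    fillList G S = (fillEdges G S).card := by
  induction S generalizing G with
  | nil => simp [fillList, fillEdges]
  | cons x xs ih =>
    rw [fillList, fillEdges, ih, Finset.card_union_of_disjoint]
    rw [Finset.disjoint_left]
    intro e he1 he2
    exact (fillEdges_not_mem_edgeSet he2) (deficiency_subset_edgeSet he1)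

lemma mem_fillEdges_iff {G : SimpleGraph V} {M : List V} {u v : V} :
    s(u,v) ∈ fillEdges G M ↔ ¬ G.Adj u v ∧ ∃ S, S <+: M ∧ (elimList G S).Adj u v := by
  induction M generalizing G with
  | nil =>
    simp only [fillEdges, Finset.notMem_empty, false_iff, not_and]
    rintro hna ⟨S, hS, hadj⟩
    rw [List.prefix_nil] at hS
    subst hS
    exact hna hadj
  | cons x xs ih =>
    rw [fillEdges, Finset.mem_union]
    constructor
    · rintro (h | h)
      · rw [mem_deficiency] at h
        exact ⟨h.2, [x], ⟨xs, rfl⟩, h.1⟩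
      · obtain ⟨hna', S, hS, hadj⟩ := ih.1 h
        have hx : x ∉ s(u,v) := isolated_not_mem_fillEdges (isolated_elimG_self G x) h
        rw [Sym2.mem_iff, not_or] at hx
        refine ⟨fun hG => hna' (elimG_adj_of_adj hG (fun h' => hx.1 h'.symm)
          (fun h' => hx.2 h'.symm)), x :: S, ?_, hadj⟩
        exact List.cons_prefix_cons.2 ⟨rfl, hS⟩
    · rintro ⟨hna, S, hS, hadj⟩
      rcases S with _ | ⟨y, S'⟩
      · exact absurd hadj hna
      · obtain ⟨heq, hS'⟩ := List.cons_prefix_cons.1 hS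
        subst heq
        by_cases h' : (elimG G y).Adj u v
        · exact Or.inl (mem_deficiency.2 ⟨h', hna⟩)
        · exact Or.inr (ih.2 ⟨h', S', hS', hadj⟩)

lemma elimList_adj_mono_prefix {G : SimpleGraph V} {S1 S2 : List V} (h : S1 <+: S2)
    {u v : V} (hadj : (elimList G S1).Adj u v) (hu : u ∉ S2) (hv : v ∉ S2) :
    (elimList G S2).Adj u v := by
  obtain ⟨t, rfl⟩ := h
  rw [elimList_append]
  exact elimList_adj_of_adj hadj (fun h => hu (List.mem_append_right _ h))
    (fun h => hv (List.mem_append_right _ h))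

end Batch1

section Batch2

variable {V : Type*} [Fintype V] [DecidableEq V]

/-- A cycle of length `n` in `H`, given by vertices `c 0, …, c (n-1)`. -/
def IsCycleOn' (H : SimpleGraph V) (n : ℕ) (c : ℕ → V) : Prop :=
  (∀ i j, i < n → j < n → c i = c j → i = j) ∧
    (∀ i, i + 1 < n → H.Adj (c i) (c (i + 1))) ∧ H.Adj (c (n - 1)) (c 0)

/-- The chords of the cycle that are present in `H`. -/
noncomputable def chordsF (H : SimpleGraph V) (n : ℕ) (c : ℕ → V) : Finset (Sym2 V) :=
  (((Finset.range n) ×ˢ (Finset.range n)).filter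
    (fun p => p.1 + 2 ≤ p.2 ∧ ¬(p.1 = 0 ∧ p.2 = n - 1) ∧ H.Adj (c p.1) (c p.2))).image
    (fun p => s(c p.1, c p.2))

lemma mem_chordsF {H : SimpleGraph V} {n : ℕ} {c : ℕ → V} {e : Sym2 V} :
    e ∈ chordsF H n c ↔ ∃ p1 p2, p1 < n ∧ p2 < n ∧ p1 + 2 ≤ p2 ∧
      ¬(p1 = 0 ∧ p2 = n - 1) ∧ H.Adj (c p1) (c p2) ∧ e = s(c p1, c p2) := by
  simp only [chordsF, Finset.mem_image, Finset.mem_filter, Finset.mem_product,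
    Finset.mem_range]
  constructor
  · rintro ⟨⟨p1, p2⟩, ⟨⟨h1, h2⟩, h3, h4, h5⟩, rfl⟩
    exact ⟨p1, p2, h1, h2, h3, h4, h5, rfl⟩
  · rintro ⟨p1, p2, h1, h2, h3, h4, h5, rfl⟩
    exact ⟨(p1, p2), ⟨⟨h1, h2⟩, h3, h4, h5⟩, rfl⟩

/-- Chord-counting: if every cycle of length ≥ 4 in `H` has a chord, then any cycle of
length `n ≥ 3` has at least `n - 3` chords. -/
lemma chords_card_ge (H : SimpleGraph V)
    (hch : ∀ m c, 4 ≤ m → IsCycleOn' H m c → ∃ i j, i + 2 ≤ j ∧ j < m ∧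
      ¬(i = 0 ∧ j = m - 1) ∧ H.Adj (c i) (c j)) :
    ∀ n, ∀ c : ℕ → V, 3 ≤ n → IsCycleOn' H n c → n - 3 ≤ (chordsF H n c).card := by
  intro n
  induction n using Nat.strong_induction_on with
  | _ n IH =>
  intro c hn3 hcyc
  rcases Nat.lt_or_ge n 4 with hn4 | hn4
  · have : n - 3 = 0 := by omega
    simp [this]
  obtain ⟨hinj, hadj, hwrap⟩ := hcyc
  obtain ⟨i, j, hij2, hjn, hij3, hadjij⟩ := hch n c hn4 ⟨hinj, hadj, hwrap⟩
  have hj' : i ≠ 0 ∨ j ≠ n - 1 := by tauto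
  set n1 := j - i + 1 with hn1
  set n2 := n - j + i + 1 with hn2
  have hn13 : 3 ≤ n1 := by omega
  have hn23 : 3 ≤ n2 := by omega
  have hn1n : n1 < n := by omega
  have hn2n : n2 < n := by omega
  have hsum : n1 + n2 = n + 2 := by omega
  set c1 : ℕ → V := fun t => c (i + t) with hc1
  set c2 : ℕ → V := fun t => c (if j + t < n then j + t else j + t - n) with hc2
  have hgval : ∀ t, t < n2 → (c2 t = c (j + t) ∧ j + t < n) ∨
      (c2 t = c (j + t - n) ∧ n ≤ j + t ∧ j + t - n ≤ i) := by
    intro t ht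
    by_cases hw : j + t < n
    · left; exact ⟨by simp [hc2, hw], hw⟩
    · right; exact ⟨by simp [hc2, hw], by omega, by omega⟩
  have cyc1 : IsCycleOn' H n1 c1 := by
    refine ⟨?_, ?_, ?_⟩
    · intro t t' ht ht' heq
      have := hinj (i + t) (i + t') (by omega) (by omega) heq
      omega
    · intro t ht
      show H.Adj (c (i + t)) (c (i + (t + 1)))
      rw [show i + (t + 1) = (i + t) + 1 by ring]
      exact hadj (i + t) (by omega)
    · show H.Adj (c (i + (n1 - 1))) (c (i + 0))
      rw [show i + (n1 - 1) = j by omega, show i + 0 = i by ring]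
      exact hadjij.symm
  have cyc2 : IsCycleOn' H n2 c2 := by
    refine ⟨?_, ?_, ?_⟩
    · intro t t' ht ht' heq
      rcases hgval t ht with ⟨e1, w1⟩ | ⟨e1, w1, w1'⟩ <;>
        rcases hgval t' ht' with ⟨e2, w2⟩ | ⟨e2, w2, w2'⟩ <;>
        rw [e1, e2] at heq
      · have := hinj _ _ w1 w2 heq; omega
      · have := hinj _ _ w1 (by omega) heq; omega
      · have := hinj _ _ (by omega) w2 heq; omega
      · have := hinj _ _ (by omega : j + t - n < n) (by omega : j + t' - n < n) heq; omega
    · intro t ht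
      rcases hgval t (by omega) with ⟨e1, w1⟩ | ⟨e1, w1, w1'⟩ <;>
        rcases hgval (t + 1) ht with ⟨e2, w2⟩ | ⟨e2, w2, w2'⟩ <;> rw [e1, e2]
      · rw [show j + (t + 1) = (j + t) + 1 by ring]
        exact hadj (j + t) (by omega)
      · rw [show j + t = n - 1 by omega, show j + (t + 1) - n = 0 by omega]
        exact hwrap
      · omega
      · rw [show j + (t + 1) - n = (j + t - n) + 1 by omega]
        exact hadj (j + t - n) (by omega)
    · rcases hgval (n2 - 1) (by omega) with ⟨e1, w1⟩ | ⟨e1, w1, w1'⟩ <;>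
        rcases hgval 0 (by omega) with ⟨e2, w2⟩ | ⟨e2, w2, w2'⟩ <;> rw [e1, e2]
      · omega
      · omega
      · rw [show j + (n2 - 1) - n = i by omega, show j + 0 = j by ring]
        exact hadjij
      · omega
  have hA : chordsF H n1 c1 ⊆ chordsF H n c := by
    intro e he
    rw [mem_chordsF] at he ⊢
    obtain ⟨p1, p2, h1, h2, h3, h4, h5, rfl⟩ := he
    refine ⟨i + p1, i + p2, by omega, by omega, by omega, ?_, h5, rfl⟩
    rintro ⟨g1, g2⟩
    exact h4 ⟨by omega, by omega⟩
  have hB : chordsF H n2 c2 ⊆ chordsF H n c := by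
    intro e he
    rw [mem_chordsF] at he ⊢
    obtain ⟨p1, p2, h1, h2, h3, h4, h5, rfl⟩ := he
    rcases hgval p1 h1 with ⟨e1, w1⟩ | ⟨e1, w1, w1'⟩ <;>
      rcases hgval p2 h2 with ⟨e2, w2⟩ | ⟨e2, w2, w2'⟩ <;> rw [e1, e2] at h5 ⊢
    · exact ⟨j + p1, j + p2, by omega, by omega, by omega, by omega, h5, rfl⟩
    · refine ⟨j + p2 - n, j + p1, by omega, by omega, by omega, ?_, h5.symm, Sym2.eq_swap⟩
      rintro ⟨g1, g2⟩
      omega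
    · omega
    · exact ⟨j + p1 - n, j + p2 - n, by omega, by omega, by omega, by omega, h5, rfl⟩
  have hext : ∀ u v u' v', u < n → v < n → u' < n → v' < n →
      s(c u, c v) = s(c u', c v') → (u = u' ∧ v = v') ∨ (u = v' ∧ v = u') := by
    intro u v u' v' hu hv hu' hv' h
    rw [Sym2.eq_iff] at h
    rcases h with ⟨ha, hb⟩ | ⟨ha, hb⟩
    · exact Or.inl ⟨hinj _ _ hu hu' ha, hinj _ _ hv hv' hb⟩
    · exact Or.inr ⟨hinj _ _ hu hv' ha, hinj _ _ hv hu' hb⟩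
  have hABd : Disjoint (chordsF H n1 c1) (chordsF H n2 c2) := by
    rw [Finset.disjoint_left]
    intro e heA heB
    rw [mem_chordsF] at heA heB
    obtain ⟨p1, p2, a1, a2, a3, a4, -, rfl⟩ := heA
    obtain ⟨q1, q2, b1, b2, b3, b4, -, heq⟩ := heB
    rcases hgval q1 b1 with ⟨e1, w1⟩ | ⟨e1, w1, w1'⟩ <;>
      rcases hgval q2 b2 with ⟨e2, w2⟩ | ⟨e2, w2, w2'⟩ <;> rw [e1, e2] at heq
    · rcases hext (i + p1) (i + p2) (j + q1) (j + q2) (by omega) (by omega) (by omega)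
        (by omega) heq with ⟨x1, x2⟩ | ⟨x1, x2⟩ <;> exact a4 ⟨by omega, by omega⟩
    · rcases hext (i + p1) (i + p2) (j + q1) (j + q2 - n) (by omega) (by omega) (by omega)
        (by omega) heq with ⟨x1, x2⟩ | ⟨x1, x2⟩ <;> exact a4 ⟨by omega, by omega⟩
    · omega
    · rcases hext (i + p1) (i + p2) (j + q1 - n) (j + q2 - n) (by omega) (by omega)
        (by omega) (by omega) heq with ⟨x1, x2⟩ | ⟨x1, x2⟩ <;>
        exact a4 ⟨by omega, by omega⟩
  have he0 : s(c i, c j) ∈ chordsF H n c :=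
    mem_chordsF.2 ⟨i, j, by omega, hjn, hij2, hij3, hadjij, rfl⟩
  have he0A : s(c i, c j) ∉ chordsF H n1 c1 := by
    intro h
    rw [mem_chordsF] at h
    obtain ⟨p1, p2, a1, a2, a3, a4, -, heq⟩ := h
    rcases hext i j (i + p1) (i + p2) (by omega) hjn (by omega) (by omega) heq with
      ⟨x1, x2⟩ | ⟨x1, x2⟩ <;> exact a4 ⟨by omega, by omega⟩
  have he0B : s(c i, c j) ∉ chordsF H n2 c2 := by
    intro h
    rw [mem_chordsF] at h
    obtain ⟨q1, q2, b1, b2, b3, b4, -, heq⟩ := h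
    rcases hgval q1 b1 with ⟨e1, w1⟩ | ⟨e1, w1, w1'⟩ <;>
      rcases hgval q2 b2 with ⟨e2, w2⟩ | ⟨e2, w2, w2'⟩ <;> rw [e1, e2] at heq
    · rcases hext i j (j + q1) (j + q2) (by omega) hjn (by omega) (by omega) heq with
        ⟨x1, x2⟩ | ⟨x1, x2⟩ <;> exact b4 ⟨by omega, by omega⟩
    · rcases hext i j (j + q1) (j + q2 - n) (by omega) hjn (by omega) (by omega) heq with
        ⟨x1, x2⟩ | ⟨x1, x2⟩ <;> exact b4 ⟨by omega, by omega⟩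
    · omega
    · rcases hext i j (j + q1 - n) (j + q2 - n) (by omega) hjn (by omega) (by omega) heq
        with ⟨x1, x2⟩ | ⟨x1, x2⟩ <;> exact b4 ⟨by omega, by omega⟩
  have hU : (chordsF H n1 c1 ∪ chordsF H n2 c2) ∪ {s(c i, c j)} ⊆ chordsF H n c := by
    intro e he
    rcases Finset.mem_union.1 he with he | he
    · rcases Finset.mem_union.1 he with he | he
      · exact hA he
      · exact hB he
    · rw [Finset.mem_singleton] at he
      subst he; exact he0
  have hcard : (chordsF H n1 c1).card + (chordsF H n2 c2).card + 1
      ≤ (chordsF H n c).card := by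
    have h1 : ((chordsF H n1 c1 ∪ chordsF H n2 c2) ∪ {s(c i, c j)}).card
        = (chordsF H n1 c1).card + (chordsF H n2 c2).card + 1 := by
      rw [Finset.card_union_of_disjoint, Finset.card_union_of_disjoint hABd,
        Finset.card_singleton]
      rw [Finset.disjoint_left]
      intro e he he'
      rw [Finset.mem_singleton] at he'
      subst he'
      rcases Finset.mem_union.1 he with he | he
      · exact he0A he
      · exact he0B he
    calc (chordsF H n1 c1).card + (chordsF H n2 c2).card + 1 = _ := h1.symm
      _ ≤ (chordsF H n c).card := Finset.card_le_card hU
  have IH1 := IH n1 hn1n c1 hn13 cyc1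
  have IH2 := IH n2 hn2n c2 hn23 cyc2
  omega

end Batch2

section Batch3

variable {V : Type*} [Fintype V] [DecidableEq V]

lemma exists_split_first (M : List V) (W : Finset V) (hW : W.Nonempty)
    (hmem : ∀ w ∈ W, w ∈ M) :
    ∃ S x M2, M = S ++ x :: M2 ∧ x ∈ W ∧ ∀ w ∈ W, w ∉ S := by
  induction M with
  | nil =>
    obtain ⟨w, hw⟩ := hW
    simpa using hmem w hw
  | cons y ys ih =>
    by_cases hy : y ∈ W
    · exact ⟨[], y, ys, rfl, hy, by simp⟩
    · obtain ⟨S, x, M2, hEq, hx, hS⟩ := ih (fun w hw => by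
        rcases List.mem_cons.1 (hmem w hw) with h | h
        · exact absurd (h ▸ hw) hy
        · exact h)
      refine ⟨y :: S, x, M2, by rw [hEq]; rfl, hx, ?_⟩
      intro w hw
      simp only [List.mem_cons, not_or]
      exact ⟨fun h => hy (h ▸ hw), hS w hw⟩

lemma adj_elim_time {G : SimpleGraph V} {M S M2 : List V} {x q : V}
    (hnd : M.Nodup) (hM : M = S ++ x :: M2)
    (hadj : G.Adj x q ∨ (s(x, q) ∈ fillEdges G M ∧ x ≠ q)) (hq : q ∉ S) :
    (elimList G S).Adj x q := by
  have hdisj : S.Disjoint (x :: M2) := List.disjoint_of_nodup_append (hM ▸ hnd)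
  have hxS : x ∉ S := fun hxS => hdisj hxS (List.mem_cons_self (a := x) (l := M2))
  rcases hadj with hadj | ⟨hfill, hne⟩
  · exact elimList_adj_of_adj hadj hxS hq
  · obtain ⟨hna, S1, hS1, hadj1⟩ := mem_fillEdges_iff.1 hfill
    have hpre : S <+: M := ⟨x :: M2, hM.symm⟩
    rcases List.prefix_or_prefix_of_prefix hS1 hpre with h | h
    · exact elimList_adj_mono_prefix h hadj1 hxS hq
    · obtain ⟨R, rfl⟩ := h
      have hx1 : x ∉ S ++ R := (adj_elimList_not_mem hadj1).1
      rcases R with _ | ⟨r, R'⟩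
      · simpa using hadj1
      · exfalso
        have : (r :: R') <+: (x :: M2) := by
          rw [hM] at hS1
          exact (List.prefix_append_right_inj S).1 hS1
        obtain ⟨rfl, -⟩ := List.cons_prefix_cons.1 this
        exact hx1 (List.mem_append_right S (List.mem_cons_self (a := r) (l := R')))

lemma cycle_has_chord (G : SimpleGraph V) (M : List V) (hnd : M.Nodup)
    (hall : ∀ v : V, v ∈ M) (n : ℕ) (c : ℕ → V) (hn : 4 ≤ n)
    (hcyc : IsCycleOn' (G ⊔ SimpleGraph.fromEdgeSet (↑(fillEdges G M) : Set (Sym2 V))) n c) :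
    ∃ i j, i + 2 ≤ j ∧ j < n ∧ ¬(i = 0 ∧ j = n - 1) ∧
      (G ⊔ SimpleGraph.fromEdgeSet (↑(fillEdges G M) : Set (Sym2 V))).Adj (c i) (c j) := by
  set Hs := G ⊔ SimpleGraph.fromEdgeSet (↑(fillEdges G M) : Set (Sym2 V)) with hHs
  have hHsAdj : ∀ u v, Hs.Adj u v ↔ G.Adj u v ∨ (s(u,v) ∈ fillEdges G M ∧ u ≠ v) := by
    intro u v
    rw [hHs, SimpleGraph.sup_adj, SimpleGraph.fromEdgeSet_adj, Finset.mem_coe]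
  obtain ⟨hinj, hadjc, hwrap⟩ := hcyc
  obtain ⟨S, x, M2, hM, hxW, hSW⟩ := exists_split_first M ((Finset.range n).image c)
    (⟨c 0, Finset.mem_image.2 ⟨0, Finset.mem_range.2 (by omega), rfl⟩⟩)
    (fun w _ => hall w)
  obtain ⟨i0, hi0n, hi0⟩ : ∃ i0, i0 < n ∧ c i0 = x := by
    obtain ⟨i0, h1, h2⟩ := Finset.mem_image.1 hxW
    exact ⟨i0, Finset.mem_range.1 h1, h2⟩
  subst hi0
  have hnotS : ∀ t, t < n → c t ∉ S := fun t ht =>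
    hSW (c t) (Finset.mem_image.2 ⟨t, Finset.mem_range.2 ht, rfl⟩)
  -- the two cyclic neighbours of i0
  set p := if i0 = 0 then n - 1 else i0 - 1 with hp
  set q := if i0 = n - 1 then 0 else i0 + 1 with hq
  have hpn : p < n := by rw [hp]; split <;> omega
  have hqn : q < n := by rw [hq]; split <;> omega
  have hpq : p ≠ q := by rw [hp, hq]; split <;> split <;> omega
  have hpi0 : p ≠ i0 := by rw [hp]; split <;> omega
  have hqi0 : q ≠ i0 := by rw [hq]; split <;> omega
  have hadjp : Hs.Adj (c i0) (c p) := by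
    rw [hp]
    split
    · subst ‹i0 = 0›; exact hwrap.symm
    · have := hadjc (i0 - 1) (by omega)
      rw [show i0 - 1 + 1 = i0 by omega] at this
      exact this.symm
  have hadjq : Hs.Adj (c i0) (c q) := by
    rw [hq]
    split
    · rw [‹i0 = n - 1›]; exact hwrap
    · exact hadjc i0 (by omega)
  have h1 : (elimList G S).Adj (c i0) (c p) := by
    refine adj_elim_time hnd hM ?_ (hnotS p hpn)
    exact (hHsAdj (c i0) (c p)).1 hadjp
  have h2 : (elimList G S).Adj (c i0) (c q) := by
    refine adj_elim_time hnd hM ?_ (hnotS q hqn)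
    exact (hHsAdj (c i0) (c q)).1 hadjq
  have hcpq : c p ≠ c q := fun h => hpq (hinj p q hpn hqn h)
  have hadj' : (elimList G (S ++ [c i0])).Adj (c p) (c q) := by
    rw [elimList_append]
    exact ⟨hcpq, fun h => hpi0 (hinj p i0 hpn hi0n h),
      fun h => hqi0 (hinj q i0 hqn hi0n h), Or.inr ⟨h1, h2⟩⟩
  have hHspq : Hs.Adj (c p) (c q) := by
    by_cases hG : G.Adj (c p) (c q)
    · exact (hHsAdj _ _).2 (Or.inl hG)
    · refine (hHsAdj _ _).2 (Or.inr ⟨?_, hcpq⟩)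
      refine mem_fillEdges_iff.2 ⟨hG, S ++ [c i0], ?_, hadj'⟩
      refine ⟨M2, ?_⟩
      rw [hM]
      simp
  -- normalize the chord
  by_cases h0 : i0 = 0
  · refine ⟨1, n - 1, by omega, by omega, by omega, ?_⟩
    have : p = n - 1 ∧ q = 1 := by rw [hp, hq]; constructor <;> split <;> omega
    rw [← this.1, ← this.2]
    exact hHspq.symm
  · by_cases hl : i0 = n - 1
    · refine ⟨0, n - 2, by omega, by omega, by omega, ?_⟩
      have : p = n - 2 ∧ q = 0 := by rw [hp, hq]; constructor <;> split <;> omega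
      rw [← this.1, ← this.2]
      exact hHspq.symm
    · refine ⟨i0 - 1, i0 + 1, by omega, by omega, by omega, ?_⟩
      have : p = i0 - 1 ∧ q = i0 + 1 := by rw [hp, hq]; constructor <;> split <;> omega
      rw [← this.1, ← this.2]
      exact hHspq

end Batch3

section Batch4

variable {V : Type*} [Fintype V] [DecidableEq V]

/-- Arc adjacency: `u` and `v` are the endpoints `a i`, `a j` of an arc of the path
all of whose interior indices have been eliminated (are in `Sidx`). -/
def arcPair (a : ℕ → V) (k : ℕ) (Sidx : Finset ℕ) (u v : V) : Prop :=
  ∃ i j, i < j ∧ j ≤ k + 1 ∧ i ∉ Sidx ∧ j ∉ Sidx ∧ (∀ l, i < l → l < j → l ∈ Sidx) ∧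
    ((u = a i ∧ v = a j) ∨ (u = a j ∧ v = a i))

/-- The invariant graph after eliminating the path vertices indexed by `Sidx`. -/
def invGraph (G : SimpleGraph V) (a : ℕ → V) (k : ℕ) (Sidx : Finset ℕ) : SimpleGraph V where
  Adj u v := u ≠ v ∧ (∀ t ∈ Sidx, u ≠ a t) ∧ (∀ t ∈ Sidx, v ≠ a t) ∧
    (G.Adj u v ∨ arcPair a k Sidx u v)
  symm := by
    constructor
    rintro u v ⟨h1, h2, h3, h4⟩
    refine ⟨h1.symm, h3, h2, ?_⟩
    rcases h4 with h | ⟨i, j, hij, hjk, hi, hj, hbet, hor⟩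
    · exact Or.inl h.symm
    · rcases hor with ⟨ha, hb⟩ | ⟨ha, hb⟩
      · exact Or.inr ⟨i, j, hij, hjk, hi, hj, hbet, Or.inr ⟨hb, ha⟩⟩
      · exact Or.inr ⟨i, j, hij, hjk, hi, hj, hbet, Or.inl ⟨hb, ha⟩⟩
  loopless := ⟨fun v h => h.1 rfl⟩

lemma invGraph_adj {G : SimpleGraph V} {a : ℕ → V} {k : ℕ} {Sidx : Finset ℕ} {u v : V} :
    (invGraph G a k Sidx).Adj u v ↔ u ≠ v ∧ (∀ t ∈ Sidx, u ≠ a t) ∧ (∀ t ∈ Sidx, v ≠ a t) ∧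
    (G.Adj u v ∨ arcPair a k Sidx u v) := Iff.rfl

section PathHyps

variable {G : SimpleGraph V} {k : ℕ} {a : ℕ → V}

lemma adjChar (hdeg : ∀ i : ℕ, 1 ≤ i → i ≤ k →
      G.neighborSet (a i) = {a (i - 1), a (i + 1)}) :
    ∀ i, 1 ≤ i → i ≤ k → ∀ w, G.Adj (a i) w ↔ (w = a (i - 1) ∨ w = a (i + 1)) := by
  intro i h1 h2 w
  have h := hdeg i h1 h2
  constructor
  · intro hadj
    have hw : w ∈ G.neighborSet (a i) := hadj
    rw [h] at hw
    simpa using hw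
  · intro hw
    have : w ∈ G.neighborSet (a i) := by
      rw [h]
      rcases hw with rfl | rfl
      · exact Set.mem_insert _ _
      · exact Set.mem_insert_of_mem _ rfl
    exact this

lemma adjCyc (hk : 1 ≤ k) (hdeg : ∀ i : ℕ, 1 ≤ i → i ≤ k →
      G.neighborSet (a i) = {a (i - 1), a (i + 1)}) :
    ∀ i, i ≤ k → G.Adj (a i) (a (i + 1)) := by
  intro i hik
  rcases Nat.eq_zero_or_pos i with rfl | hi
  · exact ((adjChar hdeg 1 le_rfl hk (a 0)).2 (Or.inl rfl)).symm
  · exact (adjChar hdeg i hi hik (a (i + 1))).2 (Or.inr rfl)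

lemma neighbors_char
    (hinj : ∀ i j : ℕ, 1 ≤ i → i ≤ k → 1 ≤ j → j ≤ k → a i = a j → i = j)
    (hends : ∀ i : ℕ, 1 ≤ i → i ≤ k → a i ≠ a 0 ∧ a i ≠ a (k + 1))
    (hdeg : ∀ i : ℕ, 1 ≤ i → i ≤ k → G.neighborSet (a i) = {a (i - 1), a (i + 1)})
    {Sidx : Finset ℕ} (hsub : Sidx ⊆ Finset.Icc 1 k) {t : ℕ}
    (ht1 : 1 ≤ t) (htk : t ≤ k) (htS : t ∉ Sidx) :
    ∃ p q, p < t ∧ t < q ∧ q ≤ k + 1 ∧ p ∉ Sidx ∧ q ∉ Sidx ∧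
      (∀ l, p < l → l < t → l ∈ Sidx) ∧ (∀ l, t < l → l < q → l ∈ Sidx) ∧
      (∀ u, (invGraph G a k Sidx).Adj (a t) u ↔ (u = a p ∨ u = a q)) := by
  classical
  have hsub' : ∀ s ∈ Sidx, 1 ≤ s ∧ s ≤ k := by
    intro s hs
    have := hsub hs
    rw [Finset.mem_Icc] at this
    exact this
  have h0S : (0 : ℕ) ∉ Sidx := fun h => by have := hsub' 0 h; omega
  have hk1S : (k + 1) ∉ Sidx := fun h => by have := hsub' (k + 1) h; omega
  set p := Nat.findGreatest (fun i => i ∉ Sidx) (t - 1) with hpdef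
  have hpP : p ∉ Sidx := Nat.findGreatest_spec (P := fun i => i ∉ Sidx) (Nat.zero_le _) h0S
  have hple : p ≤ t - 1 := Nat.findGreatest_le (P := fun i => i ∉ Sidx) _
  have hpt : p < t := by omega
  have hpmax : ∀ l, p < l → l < t → l ∈ Sidx := by
    intro l hl1 hl2
    by_contra hcon
    exact Nat.findGreatest_is_greatest (P := fun i => i ∉ Sidx) hl1 (by omega) hcon
  have hpbig : ∀ l, l ∉ Sidx → l < t → l ≤ p := by
    intro l hl hlt
    exact Nat.le_findGreatest (P := fun i => i ∉ Sidx) (by omega) hl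
  have hex : ∃ j, t < j ∧ j ∉ Sidx := ⟨k + 1, by omega, hk1S⟩
  set q := Nat.find hex with hqdef
  obtain ⟨htq, hqS⟩ : t < q ∧ q ∉ Sidx := Nat.find_spec hex
  have hqk : q ≤ k + 1 := Nat.find_min' hex ⟨by omega, hk1S⟩
  have hqmin : ∀ l, t < l → l < q → l ∈ Sidx := by
    intro l h1 h2
    by_contra hcon
    exact Nat.find_min hex h2 ⟨h1, hcon⟩
  have hqsmall : ∀ l, l ∉ Sidx → t < l → q ≤ l := fun l hl hlt => Nat.find_min' hex ⟨hlt, hl⟩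
  -- a-index identification helpers
  have haeq : ∀ i, i ≤ k + 1 → a t = a i → t = i := by
    intro i hik1 h
    rcases Nat.eq_zero_or_pos i with rfl | hi
    · exact absurd h (hends t ht1 htk).1
    rcases Nat.lt_or_ge i (k + 1) with h' | h'
    · exact hinj t i ht1 htk hi (by omega) h
    · have : i = k + 1 := by omega
      subst this
      exact absurd h (hends t ht1 htk).2
  have hane : ∀ i s, i ∉ Sidx → s ∈ Sidx → i ≤ k + 1 → a i ≠ a s := by
    intro i s hi hs hik1 h
    obtain ⟨hs1, hs2⟩ := hsub' s hs
    rcases Nat.eq_zero_or_pos i with rfl | hi'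
    · exact (hends s hs1 hs2).1 h.symm
    rcases Nat.lt_or_ge i (k + 1) with h' | h'
    · exact hi (hinj i s hi' (by omega) hs1 hs2 h ▸ hs)
    · have : i = k + 1 := by omega
      subst this
      exact (hends s hs1 hs2).2 h.symm
  refine ⟨p, q, hpt, htq, hqk, hpP, hqS, hpmax, hqmin, ?_⟩
  intro u
  constructor
  · rintro ⟨hne, hu1, hu2, hor⟩
    rcases hor with hG | ⟨i, j, hij, hjk1, hiS, hjS, hbet, horr⟩
    · rcases (adjChar hdeg t ht1 htk u).1 hG with rfl | rfl
      · left
        have hts : t - 1 ∉ Sidx := fun h => hu2 (t - 1) h rfl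
        have : t - 1 ≤ p := hpbig (t - 1) hts (by omega)
        rw [show p = t - 1 by omega]
      · right
        have hts : t + 1 ∉ Sidx := fun h => hu2 (t + 1) h rfl
        have : q ≤ t + 1 := hqsmall (t + 1) hts (by omega)
        rw [show q = t + 1 by omega]
    · rcases horr with ⟨hti, huj⟩ | ⟨htj, hui⟩
      · have hti' : t = i := haeq i (by omega) hti
        subst hti'
        right
        have h1 : q ≤ j := hqsmall j hjS hij
        have h2 : j = q := by
          rcases Nat.lt_or_ge q j with h' | h'
          · exact absurd (hbet q htq h') hqS
          · omega
        rw [huj, h2]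
      · have htj' : t = j := haeq j hjk1 htj
        subst htj'
        left
        have h1 : i ≤ p := hpbig i hiS hij
        have h2 : i = p := by
          rcases Nat.lt_or_ge i p with h' | h'
          · exact absurd (hbet p h' hpt) hpP
          · omega
        rw [hui, h2]
  · rintro (rfl | rfl)
    · refine ⟨?_, ?_, ?_, Or.inr ⟨p, t, hpt, by omega, hpP, htS, hpmax, Or.inr ⟨rfl, rfl⟩⟩⟩
      · intro h
        have := haeq p (by omega) h
        omega
      · intro s hs
        exact hane t s htS hs (by omega)
      · intro s hs
        exact hane p s hpP hs (by omega)
    · refine ⟨?_, ?_, ?_, Or.inr ⟨t, q, htq, hqk, htS, hqS, hqmin, Or.inl ⟨rfl, rfl⟩⟩⟩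
      · intro h
        have := haeq q hqk h
        omega
      · intro s hs
        exact hane t s htS hs (by omega)
      · intro s hs
        exact hane q s hqS hs hqk

end PathHyps

end Batch4

section Batch4b

variable {V : Type*} [Fintype V] [DecidableEq V]
variable {G : SimpleGraph V} {k : ℕ} {a : ℕ → V}

lemma a_ne_Sidx
    (hinj : ∀ i j : ℕ, 1 ≤ i → i ≤ k → 1 ≤ j → j ≤ k → a i = a j → i = j)
    (hends : ∀ i : ℕ, 1 ≤ i → i ≤ k → a i ≠ a 0 ∧ a i ≠ a (k + 1))
    {Sidx : Finset ℕ} (hsub : Sidx ⊆ Finset.Icc 1 k) {i : ℕ}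
    (hi : i ∉ Sidx) (hik : i ≤ k + 1) : ∀ s ∈ Sidx, a i ≠ a s := by
  intro s hs h
  obtain ⟨hs1, hs2⟩ := Finset.mem_Icc.1 (hsub hs)
  rcases Nat.eq_zero_or_pos i with rfl | hi'
  · exact (hends s hs1 hs2).1 h.symm
  rcases Nat.lt_or_ge i (k + 1) with h' | h'
  · exact hi ((hinj i s hi' (by omega) hs1 hs2 h) ▸ hs)
  · have hik1 : i = k + 1 := by omega
    subst hik1
    exact (hends s hs1 hs2).2 h.symm

lemma elimG_invGraph
    (hinj : ∀ i j : ℕ, 1 ≤ i → i ≤ k → 1 ≤ j → j ≤ k → a i = a j → i = j)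
    (hends : ∀ i : ℕ, 1 ≤ i → i ≤ k → a i ≠ a 0 ∧ a i ≠ a (k + 1))
    (hdeg : ∀ i : ℕ, 1 ≤ i → i ≤ k → G.neighborSet (a i) = {a (i - 1), a (i + 1)})
    {Sidx : Finset ℕ} (hsub : Sidx ⊆ Finset.Icc 1 k) {t : ℕ}
    (ht1 : 1 ≤ t) (htk : t ≤ k) (htS : t ∉ Sidx) :
    elimG (invGraph G a k Sidx) (a t) = invGraph G a k (insert t Sidx) := by
  obtain ⟨p, q, hpt, htq, hqk, hpS, hqS, hpmax, hqmin, hchar⟩ :=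
    neighbors_char hinj hends hdeg hsub ht1 htk htS
  ext u v
  constructor
  · rintro ⟨hne, hut, hvt, hor⟩
    rcases hor with ⟨hne', hu1, hv1, hGor⟩ | ⟨hadju, hadjv⟩
    · refine ⟨hne, ?_, ?_, ?_⟩
      · intro s hs
        rcases Finset.mem_insert.1 hs with rfl | hs
        · exact hut
        · exact hu1 s hs
      · intro s hs
        rcases Finset.mem_insert.1 hs with rfl | hs
        · exact hvt
        · exact hv1 s hs
      · rcases hGor with h | ⟨i, j, hij, hjk1, hiS, hjS, hbet, horr⟩
        · exact Or.inl h
        · refine Or.inr ⟨i, j, hij, hjk1, ?_, ?_,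
            fun l h1 h2 => Finset.mem_insert_of_mem (hbet l h1 h2), horr⟩
          · intro hmem
            rcases Finset.mem_insert.1 hmem with rfl | hmem
            · rcases horr with ⟨h1', h2'⟩ | ⟨h1', h2'⟩
              · exact hut h1'
              · exact hvt h2'
            · exact hiS hmem
          · intro hmem
            rcases Finset.mem_insert.1 hmem with rfl | hmem
            · rcases horr with ⟨h1', h2'⟩ | ⟨h1', h2'⟩
              · exact hvt h2'
              · exact hut h1'
            · exact hjS hmem
    · have hu := (hchar u).1 hadju
      have hv := (hchar v).1 hadjv
      have hbet' : ∀ l, p < l → l < q → l ∈ insert t Sidx := by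
        intro l h1 h2
        rcases Nat.lt_trichotomy l t with h' | rfl | h'
        · exact Finset.mem_insert_of_mem (hpmax l h1 h')
        · exact Finset.mem_insert_self _ _
        · exact Finset.mem_insert_of_mem (hqmin l h' h2)
      have hpq : p ∉ insert t Sidx := by
        rw [Finset.mem_insert]
        push_neg
        exact ⟨by omega, hpS⟩
      have hqq : q ∉ insert t Sidx := by
        rw [Finset.mem_insert]
        push_neg
        exact ⟨by omega, hqS⟩
      refine ⟨hne, ?_, ?_, Or.inr ?_⟩
      · intro s hs
        rcases Finset.mem_insert.1 hs with rfl | hs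
        · exact hut
        · exact hadju.2.2.1 s hs
      · intro s hs
        rcases Finset.mem_insert.1 hs with rfl | hs
        · exact hvt
        · exact hadjv.2.2.1 s hs
      · rcases hu with rfl | rfl <;> rcases hv with rfl | rfl
        · exact absurd rfl hne
        · exact ⟨p, q, by omega, hqk, hpq, hqq, hbet', Or.inl ⟨rfl, rfl⟩⟩
        · exact ⟨p, q, by omega, hqk, hpq, hqq, hbet', Or.inr ⟨rfl, rfl⟩⟩
        · exact absurd rfl hne
  · rintro ⟨hne, hu, hv, hor⟩
    have hut : u ≠ a t := hu t (Finset.mem_insert_self t Sidx)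
    have hvt : v ≠ a t := hv t (Finset.mem_insert_self t Sidx)
    have hu' : ∀ s ∈ Sidx, u ≠ a s := fun s hs => hu s (Finset.mem_insert_of_mem hs)
    have hv' : ∀ s ∈ Sidx, v ≠ a s := fun s hs => hv s (Finset.mem_insert_of_mem hs)
    refine ⟨hne, hut, hvt, ?_⟩
    rcases hor with h | ⟨i, j, hij, hjk1, hiS, hjS, hbet, horr⟩
    · exact Or.inl ⟨hne, hu', hv', Or.inl h⟩
    · by_cases hmid : i < t ∧ t < j
      · have hiS' : i ∉ Sidx := fun h' => hiS (Finset.mem_insert_of_mem h')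
        have hjS' : j ∉ Sidx := fun h' => hjS (Finset.mem_insert_of_mem h')
        have hip : i = p := by
          rcases Nat.lt_trichotomy i p with h' | h' | h'
          · rcases Finset.mem_insert.1 (hbet p h' (by omega)) with h'' | h''
            · omega
            · exact absurd h'' hpS
          · exact h'
          · exact absurd (hpmax i h' hmid.1) hiS'
        have hjq : j = q := by
          rcases Nat.lt_trichotomy j q with h' | h' | h'
          · exact absurd (hqmin j hmid.2 h') hjS'
          · exact h'
          · rcases Finset.mem_insert.1 (hbet q (by omega) h') with h'' | h''
            · omega
            · exact absurd h'' hqS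
        subst hip
        subst hjq
        refine Or.inr ⟨?_, ?_⟩
        · apply (hchar u).2
          rcases horr with ⟨h1, -⟩ | ⟨h1, -⟩
          · exact Or.inl h1
          · exact Or.inr h1
        · apply (hchar v).2
          rcases horr with ⟨-, h2⟩ | ⟨-, h2⟩
          · exact Or.inr h2
          · exact Or.inl h2
      · refine Or.inl ⟨hne, hu', hv', Or.inr ⟨i, j, hij, hjk1,
          fun h' => hiS (Finset.mem_insert_of_mem h'),
          fun h' => hjS (Finset.mem_insert_of_mem h'), ?_, horr⟩⟩
        intro l h1 h2
        rcases Finset.mem_insert.1 (hbet l h1 h2) with rfl | h''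
        · exact absurd ⟨h1, h2⟩ hmid
        · exact h''

lemma deficiency_invGraph
    (hinj : ∀ i j : ℕ, 1 ≤ i → i ≤ k → 1 ≤ j → j ≤ k → a i = a j → i = j)
    (hends : ∀ i : ℕ, 1 ≤ i → i ≤ k → a i ≠ a 0 ∧ a i ≠ a (k + 1))
    (hdeg : ∀ i : ℕ, 1 ≤ i → i ≤ k → G.neighborSet (a i) = {a (i - 1), a (i + 1)})
    {Sidx : Finset ℕ} (hsub : Sidx ⊆ Finset.Icc 1 k) {t : ℕ}
    (ht1 : 1 ≤ t) (htk : t ≤ k) (htS : t ∉ Sidx) :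
    ∃ p q, p < t ∧ t < q ∧ q ≤ k + 1 ∧ p ∉ Sidx ∧ q ∉ Sidx ∧
      (∀ l, p < l → l < t → l ∈ Sidx) ∧ (∀ l, t < l → l < q → l ∈ Sidx) ∧
      deficiencyFinset (invGraph G a k Sidx) (a t) ⊆ {s(a p, a q)} ∧
      (((invGraph G a k Sidx).Adj (a p) (a q) ∨ a p = a q) →
        deficiencyFinset (invGraph G a k Sidx) (a t) = ∅) := by
  obtain ⟨p, q, hpt, htq, hqk, hpS, hqS, hpmax, hqmin, hchar⟩ :=
    neighbors_char hinj hends hdeg hsub ht1 htk htS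
  have hsubs : deficiencyFinset (invGraph G a k Sidx) (a t) ⊆ {s(a p, a q)} := by
    intro e he
    induction e using Sym2.ind with
    | _ u v =>
      obtain ⟨hadj, hna⟩ := mem_deficiency.1 he
      obtain ⟨hne, hu, hv, hor⟩ := hadj
      rcases hor with h | ⟨h1, h2⟩
      · exact absurd h hna
      have hu' := (hchar u).1 h1
      have hv' := (hchar v).1 h2
      rw [Finset.mem_singleton]
      rcases hu' with rfl | rfl <;> rcases hv' with rfl | rfl
      · exact absurd rfl hne
      · rfl
      · exact Sym2.eq_swap
      · exact absurd rfl hne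
  refine ⟨p, q, hpt, htq, hqk, hpS, hqS, hpmax, hqmin, hsubs, ?_⟩
  intro hor
  rw [Finset.eq_empty_iff_forall_notMem]
  intro e he
  have hee := hsubs he
  rw [Finset.mem_singleton] at hee
  subst hee
  obtain ⟨hadj, hna⟩ := mem_deficiency.1 he
  rcases hor with h | h
  · exact hna h
  · exact hadj.1 h

lemma invGraph_empty (hk : 1 ≤ k)
    (hdeg : ∀ i : ℕ, 1 ≤ i → i ≤ k → G.neighborSet (a i) = {a (i - 1), a (i + 1)}) :
    invGraph G a k ∅ = G := by
  ext u v
  rw [invGraph_adj]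
  constructor
  · rintro ⟨hne, -, -, h | ⟨i, j, hij, hjk1, -, -, hbet, horr⟩⟩
    · exact h
    · have hj : j = i + 1 := by
        by_contra hcon
        have : i + 1 ∈ (∅ : Finset ℕ) := hbet (i + 1) (by omega) (by omega)
        simp at this
      subst hj
      have hadj := adjCyc hk hdeg i (by omega)
      rcases horr with ⟨rfl, rfl⟩ | ⟨rfl, rfl⟩
      · exact hadj
      · exact hadj.symm
  · intro h
    exact ⟨h.ne, by simp, by simp, Or.inl h⟩

lemma invGraph_full_le
    (hcase : a 0 = a (k + 1) ∨ G.Adj (a 0) (a (k + 1))) :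
    invGraph G a k (Finset.Icc 1 k) ≤ G := by
  rintro u v ⟨hne, hu, hv, h | ⟨i, j, hij, hjk1, hiS, hjS, hbet, horr⟩⟩
  · exact h
  · have hi0 : i = 0 := by
      by_contra hcon
      exact hiS (Finset.mem_Icc.2 ⟨by omega, by omega⟩)
    have hjk : j = k + 1 := by
      by_contra hcon
      exact hjS (Finset.mem_Icc.2 ⟨by omega, by omega⟩)
    subst hi0
    subst hjk
    rcases hcase with heq | hadj
    · rcases horr with ⟨rfl, rfl⟩ | ⟨rfl, rfl⟩
      · exact absurd heq hne
      · exact absurd heq.symm hne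
    · rcases horr with ⟨rfl, rfl⟩ | ⟨rfl, rfl⟩
      · exact hadj
      · exact hadj.symm

lemma invGraph_full_isolated {t : ℕ} (ht1 : 1 ≤ t) (htk : t ≤ k) :
    Isolated (invGraph G a k (Finset.Icc 1 k)) (a t) := by
  rintro w ⟨-, hu, -, -⟩
  exact hu t (Finset.mem_Icc.2 ⟨ht1, htk⟩) rfl

lemma invGraph_full_adj_of {u v : V} (h : G.Adj u v)
    (hu : ∀ t, 1 ≤ t → t ≤ k → u ≠ a t) (hv : ∀ t, 1 ≤ t → t ≤ k → v ≠ a t) :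
    (invGraph G a k (Finset.Icc 1 k)).Adj u v := by
  refine ⟨h.ne, ?_, ?_, Or.inl h⟩
  · intro s hs
    obtain ⟨h1, h2⟩ := Finset.mem_Icc.1 hs
    exact hu s h1 h2
  · intro s hs
    obtain ⟨h1, h2⟩ := Finset.mem_Icc.1 hs
    exact hv s h1 h2

end Batch4b

section Batch4c

variable {V : Type*} [Fintype V] [DecidableEq V]
variable {G : SimpleGraph V} {k : ℕ} {a : ℕ → V}

lemma inv_main
    (hinj : ∀ i j : ℕ, 1 ≤ i → i ≤ k → 1 ≤ j → j ≤ k → a i = a j → i = j)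
    (hends : ∀ i : ℕ, 1 ≤ i → i ≤ k → a i ≠ a 0 ∧ a i ≠ a (k + 1))
    (hdeg : ∀ i : ℕ, 1 ≤ i → i ≤ k → G.neighborSet (a i) = {a (i - 1), a (i + 1)})
    (hcase : a 0 = a (k + 1) ∨ G.Adj (a 0) (a (k + 1))) :
    ∀ (TL : List ℕ) (Sidx : Finset ℕ), Sidx ⊆ Finset.Icc 1 k → TL.Nodup →
    (∀ t, t ∈ TL ↔ (t ∈ Finset.Icc 1 k ∧ t ∉ Sidx)) →
    elimList (invGraph G a k Sidx) (TL.map a) = invGraph G a k (Finset.Icc 1 k) ∧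
    fillList (invGraph G a k Sidx) (TL.map a) ≤
      (if a 0 = a (k + 1) then TL.length - 2 else TL.length - 1) := by
  intro TL
  induction TL with
  | nil =>
    intro Sidx hsub hnd hmem
    have hSeq : Sidx = Finset.Icc 1 k := by
      apply Finset.Subset.antisymm hsub
      intro t ht
      by_contra hcon
      have := (hmem t).2 ⟨ht, hcon⟩
      simp at this
    rw [hSeq]
    refine ⟨rfl, ?_⟩
    show (0 : ℕ) ≤ _
    exact Nat.zero_le _
  | cons t TL' ih =>
    intro Sidx hsub hnd hmem
    obtain ⟨htI, htS⟩ := (hmem t).1 (List.mem_cons_self (a := t) (l := TL'))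
    obtain ⟨ht1, htk⟩ := Finset.mem_Icc.1 htI
    have hstep := elimG_invGraph hinj hends hdeg hsub ht1 htk htS
    have hsub' : insert t Sidx ⊆ Finset.Icc 1 k := by
      intro s hs
      rcases Finset.mem_insert.1 hs with rfl | hs
      · exact htI
      · exact hsub hs
    have hnd' := (List.nodup_cons.1 hnd).2
    have htTL : t ∉ TL' := (List.nodup_cons.1 hnd).1
    have hmem' : ∀ s, s ∈ TL' ↔ (s ∈ Finset.Icc 1 k ∧ s ∉ insert t Sidx) := by
      intro s
      constructor
      · intro hs
        obtain ⟨h1, h2⟩ := (hmem s).1 (List.mem_cons_of_mem t hs)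
        refine ⟨h1, ?_⟩
        rw [Finset.mem_insert]
        push_neg
        exact ⟨fun h => htTL (h ▸ hs), h2⟩
      · rintro ⟨h1, h2⟩
        rw [Finset.mem_insert] at h2
        push_neg at h2
        rcases List.mem_cons.1 ((hmem s).2 ⟨h1, h2.2⟩) with rfl | hs
        · exact absurd rfl h2.1
        · exact hs
    obtain ⟨ihE, ihF⟩ := ih (insert t Sidx) hsub' hnd' hmem'
    constructor
    · show elimList (elimG (invGraph G a k Sidx) (a t)) (TL'.map a) = _
      rw [hstep]
      exact ihE
    · show (deficiencyFinset (invGraph G a k Sidx) (a t)).card +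
        fillList (elimG (invGraph G a k Sidx) (a t)) (TL'.map a) ≤ _
      rw [hstep]
      obtain ⟨p, q, hpt, htq, hqk, hpS, hqS, hpmax, hqmin, hsubs, hzero⟩ :=
        deficiency_invGraph hinj hends hdeg hsub ht1 htk htS
      have h0S : (0 : ℕ) ∉ Sidx := fun h => by
        have := Finset.mem_Icc.1 (hsub h); omega
      have hk1S : (k + 1) ∉ Sidx := fun h => by
        have := Finset.mem_Icc.1 (hsub h); omega
      have hOnly : ∀ s, 1 ≤ s → s ≤ k → s ∉ Sidx → (s = t ∨ s ∈ TL') := by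
        intro s h1 h2 h3
        exact List.mem_cons.1 ((hmem s).2 ⟨Finset.mem_Icc.2 ⟨h1, h2⟩, h3⟩)
      have hcard1 : (deficiencyFinset (invGraph G a k Sidx) (a t)).card ≤ 1 := by
        refine le_trans (Finset.card_le_card hsubs) ?_
        simp
      -- zero deficiency when the path is exhausted
      have hdef0 : TL' = [] → deficiencyFinset (invGraph G a k Sidx) (a t) = ∅ := by
        intro hTL
        subst hTL
        have hp0 : p = 0 := by
          by_contra hcon
          rcases hOnly p (by omega) (by omega) hpS with h | h
          · omega
          · simp at h
        have hqk1 : q = k + 1 := by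
          rcases Nat.lt_or_ge q (k + 1) with h' | h'
          · rcases hOnly q (by omega) (by omega) hqS with h | h
            · omega
            · simp at h
          · omega
        apply hzero
        rw [hp0, hqk1]
        rcases hcase with heq | hadj
        · exact Or.inr heq
        · exact Or.inl ⟨hadj.ne, a_ne_Sidx hinj hends hsub h0S (by omega),
            a_ne_Sidx hinj hends hsub hk1S (by omega), Or.inl hadj⟩
      have hdef0' : a 0 = a (k + 1) → TL'.length ≤ 1 →
          deficiencyFinset (invGraph G a k Sidx) (a t) = ∅ := by
        intro hE hlen
        rcases TL' with _ | ⟨s, TL''⟩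
        · exact hdef0 rfl
        rcases TL'' with _ | ⟨s', _⟩
        swap
        · simp at hlen
        obtain ⟨hsI, hsIn⟩ := (hmem' s).1 (List.mem_cons_self (a := s) (l := []))
        obtain ⟨hs1, hsk⟩ := Finset.mem_Icc.1 hsI
        rw [Finset.mem_insert] at hsIn
        push_neg at hsIn
        obtain ⟨hst, hsS⟩ := hsIn
        have hOnly2 : ∀ l, 1 ≤ l → l ≤ k → l ∉ Sidx → (l = t ∨ l = s) := by
          intro l h1 h2 h3
          rcases hOnly l h1 h2 h3 with h | h
          · exact Or.inl h
          · simp at h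
            exact Or.inr h
        rcases Nat.lt_or_ge s t with hst' | hst'
        · -- s < t : p = s, q = k + 1
          have hps : p = s := by
            rcases Nat.lt_trichotomy p s with h' | h' | h'
            · exact absurd (hpmax s h' hst') hsS
            · exact h'
            · rcases hOnly2 p (by omega) (by omega) hpS with h | h <;> omega
          have hqk1 : q = k + 1 := by
            rcases Nat.lt_or_ge q (k + 1) with h' | h'
            · rcases hOnly2 q (by omega) (by omega) hqS with h | h <;> omega
            · omega
          apply hzero
          rw [hps, hqk1]
          refine Or.inl ⟨(hends s hs1 hsk).2, a_ne_Sidx hinj hends hsub hsS (by omega),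
            a_ne_Sidx hinj hends hsub hk1S (by omega),
            Or.inr ⟨0, s, by omega, by omega, h0S, hsS, ?_, Or.inr ⟨rfl, hE.symm⟩⟩⟩
          intro l h1 h2
          by_contra hcon
          rcases hOnly2 l (by omega) (by omega) hcon with h | h <;> omega
        · -- t < s : p = 0, q = s
          have hst'' : t < s := by omega
          have hp0 : p = 0 := by
            by_contra hcon
            rcases hOnly2 p (by omega) (by omega) hpS with h | h <;> omega
          have hqs : q = s := by
            rcases Nat.lt_trichotomy q s with h' | h' | h'
            · rcases hOnly2 q (by omega) (by omega) hqS with h | h <;> omega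
            · exact h'
            · exact absurd (hqmin s hst'' h') hsS
          apply hzero
          rw [hp0, hqs]
          refine Or.inl ⟨(hends s hs1 hsk).1.symm, a_ne_Sidx hinj hends hsub h0S (by omega),
            a_ne_Sidx hinj hends hsub hsS (by omega),
            Or.inr ⟨s, k + 1, by omega, le_rfl, hsS, hk1S, ?_, Or.inr ⟨hE, rfl⟩⟩⟩
          intro l h1 h2
          by_contra hcon
          rcases hOnly2 l (by omega) (by omega) hcon with h | h <;> omega
      by_cases hE : a 0 = a (k + 1)
      · simp only [if_pos hE] at ihF ⊢
        rcases Nat.lt_or_ge TL'.length 2 with hlen | hlen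
        · rw [hdef0' hE (by omega), Finset.card_empty]
          simp only [List.length_cons]
          omega
        · simp only [List.length_cons]
          omega
      · simp only [if_neg hE] at ihF ⊢
        rcases eq_or_ne TL' ([] : List ℕ) with rfl | hTL
        · rw [hdef0 rfl, Finset.card_empty]
          simp [fillList]
        · have : 1 ≤ TL'.length := by
            rcases TL' with _ | _
            · exact absurd rfl hTL
            · simp
          simp only [List.length_cons]
          omega

end Batch4c

section Batch5

variable {V : Type*} [Fintype V] [DecidableEq V]

lemma elimList_filter (p : V → Bool) :
    ∀ (l : List V) (G : SimpleGraph V), (∀ x, p x = false → Isolated G x) →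
    elimList G (l.filter p) = elimList G l := by
  intro l
  induction l with
  | nil => intro G _; rfl
  | cons x xs ih =>
    intro G h
    rcases hx : p x with _ | _
    · rw [List.filter_cons, if_neg (by simp [hx])]
      show elimList G (xs.filter p) = elimList (elimG G x) xs
      rw [elimG_eq_of_isolated (h x hx)]
      exact ih G h
    · rw [List.filter_cons, if_pos (by simp [hx])]
      show elimList (elimG G x) (xs.filter p) = elimList (elimG G x) xs
      exact ih (elimG G x) (fun y hy => (h y hy).elimG)

lemma filter_prefix_lift (p : V → Bool) :
    ∀ (l S : List V), S <+: l.filter p → ∃ l₁ l₂, l = l₁ ++ l₂ ∧ l₁.filter p = S := by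
  intro l
  induction l with
  | nil =>
    intro S hS
    simp only [List.filter_nil, List.prefix_nil] at hS
    exact ⟨[], [], rfl, by simp [hS]⟩
  | cons x xs ih =>
    intro S hS
    rcases hx : p x with _ | _
    · rw [List.filter_cons, if_neg (by simp [hx])] at hS
      obtain ⟨l₁, l₂, rfl, hfil⟩ := ih S hS
      exact ⟨x :: l₁, l₂, rfl, by rw [List.filter_cons, if_neg (by simp [hx]), hfil]⟩
    · rw [List.filter_cons, if_pos (by simp [hx])] at hS
      rcases S with _ | ⟨y, S'⟩
      · exact ⟨[], x :: xs, rfl, rfl⟩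
      · obtain ⟨heq, hS'⟩ := List.cons_prefix_cons.1 hS
        subst heq
        obtain ⟨l₁, l₂, rfl, hfil⟩ := ih S' hS'
        exact ⟨y :: l₁, l₂, rfl, by rw [List.filter_cons, if_pos (by simp [hx]), hfil]⟩

lemma fillEdges_filter_subset {G G' : SimpleGraph V} (hle : G' ≤ G) (p : V → Bool)
    (hiso : ∀ x, p x = false → Isolated G' x)
    (hadj : ∀ u v, G.Adj u v → p u = true → p v = true → G'.Adj u v)
    (M : List V) {e : Sym2 V} (he : e ∈ fillEdges G' (M.filter p)) :
    e ∈ fillEdges G M := by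
  induction e using Sym2.ind with
  | _ u v =>
    obtain ⟨hna, S', hS', hadj'⟩ := mem_fillEdges_iff.1 he
    have hpu : p u = true := by
      rcases hu : p u with _ | _
      · exact absurd (by simp) (isolated_not_mem_fillEdges (hiso u hu) he)
      · rfl
    have hpv : p v = true := by
      rcases hv : p v with _ | _
      · exact absurd (by simp) (isolated_not_mem_fillEdges (hiso v hv) he)
      · rfl
    obtain ⟨l₁, l₂, rfl, hfil⟩ := filter_prefix_lift p _ S' hS'
    have h1 : (elimList G' l₁).Adj u v := by
      rw [← elimList_filter p l₁ G' hiso, hfil]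
      exact hadj'
    have h2 : (elimList G l₁).Adj u v := elimList_mono hle l₁ h1
    exact mem_fillEdges_iff.2 ⟨fun h => hna (hadj u v h hpu hpv), l₁, ⟨l₂, rfl⟩, h2⟩

end Batch5

section Batch6

variable {V : Type*} [Fintype V] [DecidableEq V]
variable {G : SimpleGraph V} {k : ℕ} {a : ℕ → V}

lemma lower_bound (hk : 1 ≤ k)
    (hinj : ∀ i j : ℕ, 1 ≤ i → i ≤ k → 1 ≤ j → j ≤ k → a i = a j → i = j)
    (hends : ∀ i : ℕ, 1 ≤ i → i ≤ k → a i ≠ a 0 ∧ a i ≠ a (k + 1))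
    (hdeg : ∀ i : ℕ, 1 ≤ i → i ≤ k → G.neighborSet (a i) = {a (i - 1), a (i + 1)})
    (hcase : a 0 = a (k + 1) ∨ G.Adj (a 0) (a (k + 1)))
    (M : List V) (hnd : M.Nodup) (hall : ∀ v : V, v ∈ M) :
    ((if a 0 = a (k + 1) then k + 1 else k + 2) - 3) +
      (fillEdges (invGraph G a k (Finset.Icc 1 k))
        (M.filter (fun v => v ∉ (Finset.Icc 1 k).image a))).card
      ≤ (fillEdges G M).card := by
  set n := (if a 0 = a (k + 1) then k + 1 else k + 2) with hn
  set G' := invGraph G a k (Finset.Icc 1 k) with hG'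
  have hG'le : G' ≤ G := invGraph_full_le hcase
  have hBsub : ∀ e ∈ fillEdges G' (M.filter (fun v => v ∉ (Finset.Icc 1 k).image a)),
      e ∈ fillEdges G M := by
    intro e he
    refine fillEdges_filter_subset hG'le _ ?_ ?_ M he
    · intro x hx
      have hxP : x ∈ (Finset.Icc 1 k).image a := by
        by_contra hc
        simp [hc] at hx
      obtain ⟨t, ht, rfl⟩ := Finset.mem_image.1 hxP
      obtain ⟨h1, h2⟩ := Finset.mem_Icc.1 ht
      exact invGraph_full_isolated h1 h2
    · intro u v huv hu hv
      rw [decide_eq_true_eq] at hu hv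
      refine invGraph_full_adj_of huv ?_ ?_
      · intro t h1 h2 heq
        exact hu (Finset.mem_image.2 ⟨t, Finset.mem_Icc.2 ⟨h1, h2⟩, heq.symm⟩)
      · intro t h1 h2 heq
        exact hv (Finset.mem_image.2 ⟨t, Finset.mem_Icc.2 ⟨h1, h2⟩, heq.symm⟩)
  have hBavoid : ∀ e ∈ fillEdges G' (M.filter (fun v => v ∉ (Finset.Icc 1 k).image a)),
      ∀ t, 1 ≤ t → t ≤ k → a t ∉ e :=
    fun e he t h1 h2 => isolated_not_mem_fillEdges (invGraph_full_isolated h1 h2) he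
  rcases Nat.lt_or_ge n 4 with hn4 | hn4
  · have hzero : n - 3 = 0 := by omega
    rw [hzero, zero_add]
    exact Finset.card_le_card (fun e he => hBsub e he)
  · have hEn : (a 0 = a (k + 1) ∧ n = k + 1) ∨ (a 0 ≠ a (k + 1) ∧ n = k + 2) := by
      by_cases hE : a 0 = a (k + 1)
      · exact Or.inl ⟨hE, by rw [hn, if_pos hE]⟩
      · exact Or.inr ⟨hE, by rw [hn, if_neg hE]⟩
    have hnk : n ≤ k + 2 ∧ k + 1 ≤ n := by rcases hEn with ⟨-, h⟩ | ⟨-, h⟩ <;> omega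
    have hainj : ∀ i j, i < n → j < n → a i = a j → i = j := by
      have key : ∀ i j, i < j → j < n → a i ≠ a j := by
        intro i j hij hj h
        rcases hEn with ⟨hE, hnv⟩ | ⟨hE, hnv⟩
        · have hjk : j ≤ k := by omega
          rcases Nat.eq_zero_or_pos i with rfl | hi1
          · exact (hends j (by omega) hjk).1 h.symm
          · exact absurd (hinj i j hi1 (by omega) (by omega) hjk h) (by omega)
        · rcases Nat.lt_or_ge j (k + 1) with hjk | hjk
          · rcases Nat.eq_zero_or_pos i with rfl | hi1
            · exact (hends j (by omega) (by omega)).1 h.symm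
            · exact absurd (hinj i j hi1 (by omega) (by omega) (by omega) h) (by omega)
          · have hj' : j = k + 1 := by omega
            subst hj'
            rcases Nat.eq_zero_or_pos i with rfl | hi1
            · exact hE h
            · exact (hends i hi1 (by omega)).2 h
      intro i j hi hj h
      rcases Nat.lt_trichotomy i j with h' | h' | h'
      · exact absurd h (key i j h' hj)
      · exact h'
      · exact absurd h.symm (key j i h' hi)
  -- the cycle in the filled graph
    have hGle : G ≤ G ⊔ SimpleGraph.fromEdgeSet (↑(fillEdges G M) : Set (Sym2 V)) :=
      le_sup_left
    have hcyc : IsCycleOn' (G ⊔ SimpleGraph.fromEdgeSet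
        (↑(fillEdges G M) : Set (Sym2 V))) n a := by
      refine ⟨hainj, ?_, ?_⟩
      · intro i hi
        exact hGle (adjCyc hk hdeg i (by omega))
      · rcases hEn with ⟨hE, hnv⟩ | ⟨hE, hnv⟩
        · rw [show n - 1 = k by omega, hE]
          exact hGle (adjCyc hk hdeg k le_rfl)
        · rw [show n - 1 = k + 1 by omega]
          rcases hcase with heq | hadj
          · exact absurd heq hE
          · exact hGle hadj.symm
    have hcount := chords_card_ge _
      (fun m c hm hc => cycle_has_chord G M hnd hall m c hm hc) n a (by omega) hcyc
    have hinduced : ∀ q1 q2, q1 + 2 ≤ q2 → q2 < n → ¬(q1 = 0 ∧ q2 = n - 1) →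
        ¬ G.Adj (a q1) (a q2) := by
      intro q1 q2 h2 hq2 h3 hadj
      rcases Nat.lt_or_ge q2 (k + 1) with hq2k | hq2k
      · rcases (adjChar hdeg q2 (by omega) (by omega) (a q1)).1 hadj.symm with h | h
        · rcases Nat.eq_zero_or_pos q1 with rfl | hq1
          · exact (hends (q2 - 1) (by omega) (by omega)).1 h.symm
          · have := hinj q1 (q2 - 1) hq1 (by omega) (by omega) (by omega) h
            omega
        · rcases Nat.lt_or_ge (q2 + 1) (k + 1) with h' | h'
          · rcases Nat.eq_zero_or_pos q1 with rfl | hq1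
            · exact (hends (q2 + 1) (by omega) (by omega)).1 h.symm
            · have := hinj q1 (q2 + 1) hq1 (by omega) (by omega) (by omega) h
              omega
          · have hq2k' : q2 + 1 = k + 1 := by omega
            rw [hq2k'] at h
            rcases Nat.eq_zero_or_pos q1 with rfl | hq1
            · rcases hEn with ⟨hE, hnv⟩ | ⟨hE, hnv⟩
              · exact h3 ⟨rfl, by omega⟩
              · exact hE h
            · exact (hends q1 hq1 (by omega)).2 h
      · have hq2' : q2 = k + 1 := by omega
        have hnv : n = k + 2 := by omega
        have hE : a 0 ≠ a (k + 1) := by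
          rcases hEn with ⟨hE, hnv'⟩ | ⟨hE, hnv'⟩
          · omega
          · exact hE
        subst hq2'
        rcases Nat.eq_zero_or_pos q1 with rfl | hq1
        · exact h3 ⟨rfl, by omega⟩
        · rcases (adjChar hdeg q1 hq1 (by omega) (a (k + 1))).1 hadj with h | h
          · rcases Nat.eq_zero_or_pos (q1 - 1) with h0 | h1
            · rw [h0] at h
              exact hE h.symm
            · exact (hends (q1 - 1) h1 (by omega)).2 h.symm
          · exact (hends (q1 + 1) (by omega) (by omega)).2 h.symm
    have hAsub : chordsF (G ⊔ SimpleGraph.fromEdgeSet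
        (↑(fillEdges G M) : Set (Sym2 V))) n a ⊆ fillEdges G M := by
      intro e he
      obtain ⟨q1, q2, hq1, hq2, h2, h3, hadj, rfl⟩ := mem_chordsF.1 he
      rcases (SimpleGraph.sup_adj _ _ _ _).1 hadj with h | h
      · exact absurd h (hinduced q1 q2 h2 hq2 h3)
      · exact Finset.mem_coe.1 ((SimpleGraph.fromEdgeSet_adj _).1 h).1
    have hAtouch : ∀ e ∈ chordsF (G ⊔ SimpleGraph.fromEdgeSet
        (↑(fillEdges G M) : Set (Sym2 V))) n a, ∃ t, 1 ≤ t ∧ t ≤ k ∧ a t ∈ e := by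
      intro e he
      obtain ⟨q1, q2, hq1, hq2, h2, h3, -, rfl⟩ := mem_chordsF.1 he
      rcases Nat.eq_zero_or_pos q1 with rfl | h1
      · exact ⟨q2, by omega, by omega, by simp⟩
      · exact ⟨q1, h1, by omega, by simp⟩
    have hdisj : Disjoint (chordsF (G ⊔ SimpleGraph.fromEdgeSet
        (↑(fillEdges G M) : Set (Sym2 V))) n a)
        (fillEdges G' (M.filter (fun v => v ∉ (Finset.Icc 1 k).image a))) := by
      rw [Finset.disjoint_left]
      intro e heA heB
      obtain ⟨t, h1, h2, hmem⟩ := hAtouch e heA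
      exact hBavoid e heB t h1 h2 hmem
    have hcard1 := Finset.card_union_of_disjoint hdisj
    have hcard2 : (chordsF (G ⊔ SimpleGraph.fromEdgeSet
        (↑(fillEdges G M) : Set (Sym2 V))) n a ∪
        fillEdges G' (M.filter (fun v => v ∉ (Finset.Icc 1 k).image a))).card
        ≤ (fillEdges G M).card := by
      apply Finset.card_le_card
      intro e he
      rcases Finset.mem_union.1 he with he | he
      · exact hAsub he
      · exact hBsub e he
    omega

end Batch6


/-- let `a 1, …, a k` induce a path of degree-2 vertices with outside
neighbors `a 0` and `a (k+1)`. If `a 0 = a (k+1)` or they are adjacent (so the path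
closes into a cycle), then eliminating the path vertices first, in any order,
extends to a minimum fill-in ordering of `G`. -/
theorem stmt_14 (G : SimpleGraph V) (k : ℕ) (hk : 1 ≤ k) (a : ℕ → V)
    (hinj : ∀ i j : ℕ, 1 ≤ i → i ≤ k → 1 ≤ j → j ≤ k → a i = a j → i = j)
    (hends : ∀ i : ℕ, 1 ≤ i → i ≤ k → a i ≠ a 0 ∧ a i ≠ a (k + 1))
    (hdeg : ∀ i : ℕ, 1 ≤ i → i ≤ k →
      G.neighborSet (a i) = {a (i - 1), a (i + 1)})
    (hcase : a 0 = a (k + 1) ∨ G.Adj (a 0) (a (k + 1))) :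
    ∀ L : List V, L.Perm ((List.range k).map (fun i => a (i + 1))) →
      ∃ L' : List V, IsOrdering (L ++ L') ∧ fillList G (L ++ L') = minFillIn G := by
  intro L hL
  classical
  have hmemL : ∀ x, x ∈ L ↔ ∃ t, 1 ≤ t ∧ t ≤ k ∧ x = a t := by
    intro x
    rw [hL.mem_iff]
    simp only [List.mem_map, List.mem_range]
    constructor
    · rintro ⟨i, hi, rfl⟩
      exact ⟨i + 1, by omega, by omega, rfl⟩
    · rintro ⟨t, h1, h2, rfl⟩
      exact ⟨t - 1, by omega, by rw [show t - 1 + 1 = t by omega]⟩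
  have hRnd : ((List.range k).map (fun i => a (i + 1))).Nodup := by
    refine List.Nodup.map_on ?_ (List.nodup_range (n := k))
    intro x hx y hy hxy
    rw [List.mem_range] at hx hy
    have := hinj (x + 1) (y + 1) (by omega) (by omega) (by omega) (by omega) hxy
    omega
  have hLnd : L.Nodup := hL.nodup_iff.2 hRnd
  obtain ⟨TL, hTLmap, hTLmem⟩ : ∃ TL : List ℕ, TL.map a = L ∧ ∀ t ∈ TL, 1 ≤ t ∧ t ≤ k := by
    have aux : ∀ l : List V, (∀ x ∈ l, ∃ t, 1 ≤ t ∧ t ≤ k ∧ x = a t) →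
        ∃ TL : List ℕ, TL.map a = l ∧ ∀ t ∈ TL, 1 ≤ t ∧ t ≤ k := by
      intro l
      induction l with
      | nil => exact fun _ => ⟨[], rfl, by simp⟩
      | cons x xs ih =>
        intro h
        obtain ⟨TL', h1, h2⟩ := ih (fun y hy => h y (List.mem_cons_of_mem x hy))
        obtain ⟨t, ht1, ht2, rfl⟩ := h x (List.mem_cons_self (a := x) (l := xs))
        refine ⟨t :: TL', by simp [h1], ?_⟩
        intro s hs
        rcases List.mem_cons.1 hs with rfl | hs
        · exact ⟨ht1, ht2⟩
        · exact h2 s hs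
    exact aux L (fun x hx => (hmemL x).1 hx)
  have hTLnd : TL.Nodup := by
    have h : (TL.map a).Nodup := by rw [hTLmap]; exact hLnd
    exact h.of_map
  have hTLlen : TL.length = k := by
    have h := congrArg List.length hTLmap
    rw [List.length_map] at h
    rw [h, hL.length_eq, List.length_map, List.length_range]
  have hTLiff : ∀ t, t ∈ TL ↔ (t ∈ Finset.Icc 1 k ∧ t ∉ (∅ : Finset ℕ)) := by
    intro t
    simp only [Finset.notMem_empty, not_false_iff, and_true, Finset.mem_Icc]
    constructor
    · exact hTLmem t
    · rintro ⟨h1, h2⟩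
      have hmem : a t ∈ TL.map a := by
        rw [hTLmap]
        exact (hmemL (a t)).2 ⟨t, h1, h2, rfl⟩
      obtain ⟨t', ht', heq⟩ := List.mem_map.1 hmem
      obtain ⟨h1', h2'⟩ := hTLmem t' ht'
      rwa [hinj t' t h1' h2' h1 h2 heq] at ht'
  obtain ⟨hElim, hFill⟩ := inv_main hinj hends hdeg hcase TL ∅ (by simp) hTLnd hTLiff
  rw [invGraph_empty hk hdeg, hTLmap] at hElim hFill
  rw [hTLlen] at hFill
  -- an optimal ordering M
  have hne : {n | ∃ L0 : List V, IsOrdering L0 ∧ fillList G L0 = n}.Nonempty := by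
    refine ⟨fillList G (Finset.univ : Finset V).toList,
      (Finset.univ : Finset V).toList, ⟨?_, ?_⟩, rfl⟩
    · exact Finset.nodup_toList _
    · intro v
      rw [Finset.mem_toList]
      exact Finset.mem_univ v
  obtain ⟨M, hMord, hMfill⟩ := Nat.sInf_mem hne
  set L' := M.filter (fun v => v ∉ (Finset.Icc 1 k).image a) with hL'
  have hord : IsOrdering (L ++ L') := by
    constructor
    · rw [List.nodup_append]
      refine ⟨hLnd, hMord.1.filter _, ?_⟩
      rintro x hxL _ hxL' rfl
      obtain ⟨t, h1, h2, rfl⟩ := (hmemL x).1 hxL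
      have hmf := List.of_mem_filter hxL'
      rw [decide_eq_true_eq] at hmf
      exact hmf (Finset.mem_image.2 ⟨t, Finset.mem_Icc.2 ⟨h1, h2⟩, rfl⟩)
    · intro v
      by_cases hv : v ∈ (Finset.Icc 1 k).image a
      · obtain ⟨t, ht, rfl⟩ := Finset.mem_image.1 hv
        obtain ⟨h1, h2⟩ := Finset.mem_Icc.1 ht
        exact List.mem_append_left _ ((hmemL (a t)).2 ⟨t, h1, h2, rfl⟩)
      · refine List.mem_append_right _ ?_
        rw [hL']
        exact List.mem_filter.2 ⟨hMord.2 v, by rw [decide_eq_true_eq]; exact hv⟩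
  refine ⟨L', hord, ?_⟩
  have h1 : minFillIn G ≤ fillList G (L ++ L') := by
    rw [minFillIn]
    exact Nat.sInf_le ⟨L ++ L', hord, rfl⟩
  have h2 : fillList G (L ++ L') ≤ minFillIn G := by
    rw [minFillIn, ← hMfill]
    rw [fillList_append, hElim]
    rw [fillList_eq_card (invGraph G a k (Finset.Icc 1 k)) L', fillList_eq_card G M]
    have hLB := lower_bound hk hinj hends hdeg hcase M hMord.1 hMord.2
    rw [← hL'] at hLB
    have hFill' : fillList G L ≤ (if a 0 = a (k + 1) then k + 1 else k + 2) - 3 := by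
      by_cases hE : a 0 = a (k + 1)
      · rw [if_pos hE] at hFill ⊢
        omega
      · rw [if_neg hE] at hFill ⊢
        omega
    omega
  exact le_antisymm h2 h1
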